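/- The upper bound 1 of the normalized graph-level CFH is attained: there exists a finite simple graph G without isolated nodes, together with node features and class labels, such that d(v_i, N_i) = 0 and b(v_i) > 0 for every node v_i, and consequently h̃^(v)_i = 1 for all v_i and h̃^(G) = 1. -/

import Mathlib

open Finset

/-- The class-controlled feature `(X_i | Y)` of node `i`: its feature minus the mean
feature of the nodes of its class. -/
noncomputable def ccf {V : Type*} [Fintype V] [DecidableEq V] {k c : ℕ}
    (X : V → EuclideanSpace ℝ (Fin k)) (Y : V → Fin c) (i : V) :
    EuclideanSpace ℝ (Fin k) :=
  X i - ((Finset.univ.filter fun j => Y j = Y i).card : ℝ)⁻¹ •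
    ∑ j ∈ Finset.univ.filter fun j => Y j = Y i, X j

/-- `d(v_i, V')`: mean Euclidean distance between the class-controlled feature of `i`
and those of the nodes in `S`. -/
noncomputable def dFun {V : Type*} [Fintype V] [DecidableEq V] {k c : ℕ}
    (X : V → EuclideanSpace ℝ (Fin k)) (Y : V → Fin c) (i : V) (S : Finset V) : ℝ :=
  (S.card : ℝ)⁻¹ * ∑ j ∈ S, ‖ccf X Y i - ccf X Y j‖

/-- The homophily baseline `b(v_i) = d(v_i, V \ {v_i})`. -/
noncomputable def bFun {V : Type*} [Fintype V] [DecidableEq V] {k c : ℕ}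
    (X : V → EuclideanSpace ℝ (Fin k)) (Y : V → Fin c) (i : V) : ℝ :=
  dFun X Y i (Finset.univ.erase i)

open scoped Classical in
/-- The neighbor finset `N_i` of node `i` in the graph `G`. -/
noncomputable def nbr {V : Type*} [Fintype V] (G : SimpleGraph V) (i : V) : Finset V :=
  Finset.univ.filter fun j => G.Adj i j

/-- `d(v_i, N_i)`: mean distance from `i` to its neighbors. -/
noncomputable def dN {V : Type*} [Fintype V] [DecidableEq V] {k c : ℕ}
    (G : SimpleGraph V) (X : V → EuclideanSpace ℝ (Fin k)) (Y : V → Fin c) (i : V) : ℝ :=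
  dFun X Y i (nbr G i)

/-- Unnormalized node-level CFH `h^(v)_i = b(v_i) - d(v_i, N_i)`. -/
noncomputable def hv {V : Type*} [Fintype V] [DecidableEq V] {k c : ℕ}
    (G : SimpleGraph V) (X : V → EuclideanSpace ℝ (Fin k)) (Y : V → Fin c) (i : V) : ℝ :=
  bFun X Y i - dN G X Y i

/-- Normalized node-level CFH `h̃^(v)_i = h^(v)_i / max(b(v_i), d(v_i, N_i))`
(equal to `0` when the denominator vanishes, by the convention `x / 0 = 0`). -/
noncomputable def hvNorm {V : Type*} [Fintype V] [DecidableEq V] {k c : ℕ}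
    (G : SimpleGraph V) (X : V → EuclideanSpace ℝ (Fin k)) (Y : V → Fin c) (i : V) : ℝ :=
  hv G X Y i / max (bFun X Y i) (dN G X Y i)

/-- Unnormalized graph-level CFH `h^(G)`, the mean of the node-level CFH values. -/
noncomputable def hG {V : Type*} [Fintype V] [DecidableEq V] {k c : ℕ}
    (G : SimpleGraph V) (X : V → EuclideanSpace ℝ (Fin k)) (Y : V → Fin c) : ℝ :=
  (Fintype.card V : ℝ)⁻¹ * ∑ i, hv G X Y i

/-- Normalized graph-level CFH
`h̃^(G) = h^(G) / ((1/|V|) max(Σ_i b(v_i), Σ_i d(v_i, N_i)))`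
(equal to `0` when the denominator vanishes, by the convention `x / 0 = 0`). -/
noncomputable def hGNorm {V : Type*} [Fintype V] [DecidableEq V] {k c : ℕ}
    (G : SimpleGraph V) (X : V → EuclideanSpace ℝ (Fin k)) (Y : V → Fin c) : ℝ :=
  hG G X Y /
    ((Fintype.card V : ℝ)⁻¹ * max (∑ i, bFun X Y i) (∑ i, dN G X Y i))


section CFHExample

noncomputable def XfCFH : Fin 4 → EuclideanSpace ℝ (Fin 1) :=
  fun i => EuclideanSpace.single 0 ((![0,0,2,2] : Fin 4 → ℝ) i)

def YfCFH : Fin 4 → Fin 2 := ![0,1,0,1]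

def GrCFH : SimpleGraph (Fin 4) :=
  SimpleGraph.fromRel (fun i j => (i = 0 ∧ j = 1) ∨ (i = 2 ∧ j = 3))

lemma es_addCFH (a b : ℝ) : (EuclideanSpace.single (0:Fin 1) a) + EuclideanSpace.single 0 b
    = EuclideanSpace.single 0 (a+b) := by
  ext j
  obtain rfl : j = 0 := Subsingleton.elim j 0
  simp [PiLp.add_apply, EuclideanSpace.single_apply]

lemma es_subCFH (a b : ℝ) : (EuclideanSpace.single (0:Fin 1) a) - EuclideanSpace.single 0 b
    = EuclideanSpace.single 0 (a-b) := by
  ext j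
  obtain rfl : j = 0 := Subsingleton.elim j 0
  simp [PiLp.sub_apply, EuclideanSpace.single_apply]

lemma es_smulCFH (c a : ℝ) : c • (EuclideanSpace.single (0:Fin 1) a)
    = EuclideanSpace.single 0 (c*a) := by
  ext j
  obtain rfl : j = 0 := Subsingleton.elim j 0
  simp [PiLp.smul_apply, EuclideanSpace.single_apply]

lemma myccfCFH : ∀ i, ccf XfCFH YfCFH i
    = EuclideanSpace.single (0:Fin 1) ((![-1,-1,1,1] : Fin 4 → ℝ) i) := by
  have h0 : (Finset.univ.filter fun j => YfCFH j = YfCFH 0) = {0,2} := by decide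
  have h1 : (Finset.univ.filter fun j => YfCFH j = YfCFH 1) = {1,3} := by decide
  have h2 : (Finset.univ.filter fun j => YfCFH j = YfCFH 2) = {0,2} := by decide
  have h3 : (Finset.univ.filter fun j => YfCFH j = YfCFH 3) = {1,3} := by decide
  have c02 : (({0,2} : Finset (Fin 4)).card : ℝ) = 2 := by
    rw [show ({0,2} : Finset (Fin 4)).card = 2 from by decide]; norm_num
  have c13 : (({1,3} : Finset (Fin 4)).card : ℝ) = 2 := by
    rw [show ({1,3} : Finset (Fin 4)).card = 2 from by decide]; norm_num
  have k0 : ccf XfCFH YfCFH 0 = EuclideanSpace.single (0:Fin 1) (-1) := by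
    rw [ccf, h0, Finset.sum_pair (by decide), c02]
    show EuclideanSpace.single 0 (0:ℝ) - (2:ℝ)⁻¹ • (EuclideanSpace.single 0 (0:ℝ) + EuclideanSpace.single 0 (2:ℝ)) = _
    rw [es_addCFH, es_smulCFH, es_subCFH]; norm_num
  have k1 : ccf XfCFH YfCFH 1 = EuclideanSpace.single (0:Fin 1) (-1) := by
    rw [ccf, h1, Finset.sum_pair (by decide), c13]
    show EuclideanSpace.single 0 (0:ℝ) - (2:ℝ)⁻¹ • (EuclideanSpace.single 0 (0:ℝ) + EuclideanSpace.single 0 (2:ℝ)) = _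
    rw [es_addCFH, es_smulCFH, es_subCFH]; norm_num
  have k2 : ccf XfCFH YfCFH 2 = EuclideanSpace.single (0:Fin 1) (1:ℝ) := by
    rw [ccf, h2, Finset.sum_pair (by decide), c02]
    show EuclideanSpace.single 0 (2:ℝ) - (2:ℝ)⁻¹ • (EuclideanSpace.single 0 (0:ℝ) + EuclideanSpace.single 0 (2:ℝ)) = _
    rw [es_addCFH, es_smulCFH, es_subCFH]; norm_num
  have k3 : ccf XfCFH YfCFH 3 = EuclideanSpace.single (0:Fin 1) (1:ℝ) := by
    rw [ccf, h3, Finset.sum_pair (by decide), c13]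
    show EuclideanSpace.single 0 (2:ℝ) - (2:ℝ)⁻¹ • (EuclideanSpace.single 0 (0:ℝ) + EuclideanSpace.single 0 (2:ℝ)) = _
    rw [es_addCFH, es_smulCFH, es_subCFH]; norm_num
  intro i
  fin_cases i
  exacts [k0, k1, k2, k3]

lemma nbr0CFH : nbr GrCFH 0 = {1} := by
  ext j; simp only [nbr, GrCFH, Finset.mem_filter, Finset.mem_univ, true_and,
    SimpleGraph.fromRel_adj, Finset.mem_singleton]
  fin_cases j <;> decide
lemma nbr1CFH : nbr GrCFH 1 = {0} := by
  ext j; simp only [nbr, GrCFH, Finset.mem_filter, Finset.mem_univ, true_and,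
    SimpleGraph.fromRel_adj, Finset.mem_singleton]
  fin_cases j <;> decide
lemma nbr2CFH : nbr GrCFH 2 = {3} := by
  ext j; simp only [nbr, GrCFH, Finset.mem_filter, Finset.mem_univ, true_and,
    SimpleGraph.fromRel_adj, Finset.mem_singleton]
  fin_cases j <;> decide
lemma nbr3CFH : nbr GrCFH 3 = {2} := by
  ext j; simp only [nbr, GrCFH, Finset.mem_filter, Finset.mem_univ, true_and,
    SimpleGraph.fromRel_adj, Finset.mem_singleton]
  fin_cases j <;> decide

lemma nrmCFH (i j : Fin 4) : ‖ccf XfCFH YfCFH i - ccf XfCFH YfCFH j‖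
    = |(![-1,-1,1,1] : Fin 4 → ℝ) i - (![-1,-1,1,1] : Fin 4 → ℝ) j| := by
  rw [myccfCFH i, myccfCFH j, es_subCFH, EuclideanSpace.norm_single, Real.norm_eq_abs]

lemma dNCFH : ∀ i, dN GrCFH XfCFH YfCFH i = 0 := by
  have d0 : dN GrCFH XfCFH YfCFH 0 = 0 := by
    rw [dN, dFun, nbr0CFH, Finset.sum_singleton, nrmCFH]; norm_num
  have d1 : dN GrCFH XfCFH YfCFH 1 = 0 := by
    rw [dN, dFun, nbr1CFH, Finset.sum_singleton, nrmCFH]; norm_num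
  have d2 : dN GrCFH XfCFH YfCFH 2 = 0 := by
    rw [dN, dFun, nbr2CFH, Finset.sum_singleton, nrmCFH]; norm_num [show (![-1,-1,1,1] : Fin 4 → ℝ) 2 = 1 from rfl, show (![-1,-1,1,1] : Fin 4 → ℝ) 3 = 1 from rfl]
  have d3 : dN GrCFH XfCFH YfCFH 3 = 0 := by
    rw [dN, dFun, nbr3CFH, Finset.sum_singleton, nrmCFH]; norm_num [show (![-1,-1,1,1] : Fin 4 → ℝ) 2 = 1 from rfl, show (![-1,-1,1,1] : Fin 4 → ℝ) 3 = 1 from rfl]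
  intro i; fin_cases i; exacts [d0, d1, d2, d3]

lemma bCFH : ∀ i, bFun XfCFH YfCFH i = 4/3 := by
  have e0 : (Finset.univ : Finset (Fin 4)).erase 0 = {1,2,3} := by decide
  have e1 : (Finset.univ : Finset (Fin 4)).erase 1 = {0,2,3} := by decide
  have e2 : (Finset.univ : Finset (Fin 4)).erase 2 = {0,1,3} := by decide
  have e3 : (Finset.univ : Finset (Fin 4)).erase 3 = {0,1,2} := by decide
  have b0 : bFun XfCFH YfCFH 0 = 4/3 := by
    rw [bFun, dFun, e0, Finset.sum_insert (by decide), Finset.sum_insert (by decide),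
      Finset.sum_singleton, show ({1,2,3} : Finset (Fin 4)).card = 3 from by decide,
      nrmCFH, nrmCFH, nrmCFH]
    norm_num [show (![-1,-1,1,1] : Fin 4 → ℝ) 2 = 1 from rfl, show (![-1,-1,1,1] : Fin 4 → ℝ) 3 = 1 from rfl]
  have b1 : bFun XfCFH YfCFH 1 = 4/3 := by
    rw [bFun, dFun, e1, Finset.sum_insert (by decide), Finset.sum_insert (by decide),
      Finset.sum_singleton, show ({0,2,3} : Finset (Fin 4)).card = 3 from by decide,
      nrmCFH, nrmCFH, nrmCFH]
    norm_num [show (![-1,-1,1,1] : Fin 4 → ℝ) 2 = 1 from rfl, show (![-1,-1,1,1] : Fin 4 → ℝ) 3 = 1 from rfl]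
  have b2 : bFun XfCFH YfCFH 2 = 4/3 := by
    rw [bFun, dFun, e2, Finset.sum_insert (by decide), Finset.sum_insert (by decide),
      Finset.sum_singleton, show ({0,1,3} : Finset (Fin 4)).card = 3 from by decide,
      nrmCFH, nrmCFH, nrmCFH]
    norm_num [show (![-1,-1,1,1] : Fin 4 → ℝ) 2 = 1 from rfl, show (![-1,-1,1,1] : Fin 4 → ℝ) 3 = 1 from rfl]
  have b3 : bFun XfCFH YfCFH 3 = 4/3 := by
    rw [bFun, dFun, e3, Finset.sum_insert (by decide), Finset.sum_insert (by decide),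
      Finset.sum_singleton, show ({0,1,2} : Finset (Fin 4)).card = 3 from by decide,
      nrmCFH, nrmCFH, nrmCFH]
    norm_num [show (![-1,-1,1,1] : Fin 4 → ℝ) 2 = 1 from rfl, show (![-1,-1,1,1] : Fin 4 → ℝ) 3 = 1 from rfl]
  intro i; fin_cases i; exacts [b0, b1, b2, b3]

end CFHExample

/-- Lemma 3.1, attainment of the upper bound. There is a finite simple
graph without isolated nodes, with node features and class labels, in which every node
has zero mean distance to its neighbors but positive homophily baseline; consequently
every normalized node-level CFH equals `1` and the normalized graph-level CFH equals `1`. -/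
theorem graph_level_CFH_sup_attained :
    ∃ (n k c : ℕ) (G : SimpleGraph (Fin n)) (X : Fin n → EuclideanSpace ℝ (Fin k))
      (Y : Fin n → Fin c),
      (∀ v, (nbr G v).Nonempty) ∧
      (∀ v, dN G X Y v = 0 ∧ 0 < bFun X Y v) ∧
      (∀ v, hvNorm G X Y v = 1) ∧
      hGNorm G X Y = 1 := by
  refine ⟨4, 1, 2, GrCFH, XfCFH, YfCFH, ?_, ?_, ?_, ?_⟩
  · intro v
    fin_cases v
    · rw [show nbr GrCFH ⟨0, by omega⟩ = {1} from nbr0CFH]; exact ⟨1, by decide⟩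
    · rw [show nbr GrCFH ⟨1, by omega⟩ = {0} from nbr1CFH]; exact ⟨0, by decide⟩
    · rw [show nbr GrCFH ⟨2, by omega⟩ = {3} from nbr2CFH]; exact ⟨3, by decide⟩
    · rw [show nbr GrCFH ⟨3, by omega⟩ = {2} from nbr3CFH]; exact ⟨2, by decide⟩
  · intro v
    refine ⟨dNCFH v, ?_⟩
    rw [bCFH v]; norm_num
  · intro v
    rw [hvNorm, hv, bCFH v, dNCFH v]
    norm_num
  · rw [hGNorm, hG]
    rw [Fin.sum_univ_four, Fin.sum_univ_four, Fin.sum_univ_four]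
    simp only [hv]
    rw [bCFH, bCFH, bCFH, bCFH, dNCFH, dNCFH, dNCFH, dNCFH]
    norm_num
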